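/- The $(T+1)\times(T+1)$ block matrix $\Sigma = \begin{bmatrix}\sigma_\mu^2 & \tilde\tau\sigma_\mu\sigma_x e' \\ \tilde\tau\sigma_\mu\sigma_x e & \sigma_x^2 G\end{bmatrix}$, with $G = (1-\rho)I_T + \rho ee'$, $\sigma_\mu, \sigma_x > 0$, $\rho \in (-1/(T-1),1)$, is positive definite if and only if $\tilde\tau^2 T < 1 + (T-1)\rho$. -/

import Mathlib

open Matrix

/-- The `(T+1) × (T+1)` block matrix
`Σ = [[σμ², τ̃σμσx e'], [τ̃σμσx e, σx² G]]`, with `G = (1-ρ)I + ρee'`, `σμ, σx > 0`,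
`-1/(T-1) < ρ < 1`, is positive definite iff `τ̃² T < 1 + (T-1)ρ`. -/
theorem block_covariance_posDef_iff (T : ℕ) (hT : 2 ≤ T) (σμ σx ρ τ' : ℝ)
    (hσμ : 0 < σμ) (hσx : 0 < σx)
    (hρ : -(1 / ((T : ℝ) - 1)) < ρ) (hρ1 : ρ < 1) :
    (Matrix.of fun i j : Fin (T + 1) =>
        if i = 0 ∧ j = 0 then σμ ^ 2
        else if i = 0 ∨ j = 0 then τ' * σμ * σx
        else σx ^ 2 * (if i = j then 1 else ρ)).PosDef ↔
      τ' ^ 2 * T < 1 + ((T : ℝ) - 1) * ρ := by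
  have hT2 : (2:ℝ) ≤ (T:ℝ) := by exact_mod_cast hT
  have hTpos : (0:ℝ) < (T:ℝ) := by linarith
  have hT0 : (T:ℝ) ≠ 0 := ne_of_gt hTpos
  have hT1 : (0:ℝ) < (T:ℝ) - 1 := by linarith
  have hρ2 : -1 < ((T:ℝ) - 1) * ρ := by
    have h := mul_lt_mul_of_pos_left hρ hT1
    have he : ((T:ℝ) - 1) * (-(1 / ((T:ℝ) - 1))) = -1 := by field_simp
    linarith
  have quad : ∀ x : Fin (T+1) → ℝ,
      star x ⬝ᵥ ((Matrix.of fun i j : Fin (T + 1) =>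
        if i = 0 ∧ j = 0 then σμ ^ 2
        else if i = 0 ∨ j = 0 then τ' * σμ * σx
        else σx ^ 2 * (if i = j then 1 else ρ)) *ᵥ x) =
      (σμ * x 0 + τ' * σx * ∑ i : Fin T, x i.succ)^2
      + σx^2*(1-ρ)*((∑ i : Fin T, (x i.succ)^2) - (∑ i : Fin T, x i.succ)^2/T)
      + σx^2*((1+((T:ℝ)-1)*ρ)/T - τ'^2)*(∑ i : Fin T, x i.succ)^2 := by
    intro x
    set S := ∑ i : Fin T, x i.succ with hS
    set Q := ∑ i : Fin T, (x i.succ)^2 with hQ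
    have inner : ∀ i : Fin T,
        (∑ j : Fin T, σx^2*(if i.succ = j.succ then (1:ℝ) else ρ) * x j.succ)
        = σx^2*((1-ρ)*x i.succ + ρ * S) := by
      intro i
      have h1 : ∀ j : Fin T, σx^2*(if i.succ = j.succ then (1:ℝ) else ρ) * x j.succ
          = σx^2*ρ*x j.succ + (if i = j then σx^2*(1-ρ)*x j.succ else 0) := by
        intro j
        rcases eq_or_ne i j with h | h
        · simp [h]; ring
        · simp [h, fun h' => h (Fin.succ_inj.mp h')]
      rw [Finset.sum_congr rfl (fun j _ => h1 j), Finset.sum_add_distrib, Finset.sum_ite_eq]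
      simp only [hS, mul_add, Finset.mul_sum, mul_assoc, Finset.mem_univ, if_true]
      ring
    obtain ⟨C, hC⟩ : ∃ c : ℝ, c = τ' * σμ * σx * x 0 + σx^2*ρ*S := ⟨_, rfl⟩
    obtain ⟨D, hD⟩ : ∃ c : ℝ, c = σx^2*(1-ρ) := ⟨_, rfl⟩
    have expand : ∀ i : Fin T, x i.succ * (τ' * σμ * σx * x 0 + σx^2*((1-ρ)*x i.succ + ρ*S))
        = C * x i.succ + D * (x i.succ)^2 :=
      fun i => by rw [hC, hD]; ring
    simp only [star_trivial, dotProduct, mulVec, of_apply, Fin.sum_univ_succ (n := T),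
      Fin.succ_ne_zero, and_true, and_false, or_self, true_or, or_true, true_and, false_and,
      false_or, ite_false, ite_true, if_true, if_false, eq_self_iff_true]
    simp only [inner]
    rw [Finset.sum_congr rfl (fun i _ => expand i), Finset.sum_add_distrib,
      ← Finset.mul_sum, ← Finset.mul_sum, ← Finset.mul_sum, ← hS, ← hQ, hC, hD]
    field_simp
    ring
  constructor
  · intro hpd
    set x : Fin (T+1) → ℝ := fun i => if i = 0 then -(τ' * σx * T / σμ) else 1 with hx
    have h1ne : (1 : Fin (T+1)) ≠ 0 := by
      have : (1 : Fin (T+1)).val = 1 := by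
        simp [Fin.val_one, Nat.mod_eq_of_lt (by omega : 1 < T + 1)]
      intro h
      rw [h] at this
      simp at this
    have hxne : x ≠ 0 := by
      intro h
      have h1 : x 1 = 0 := by rw [h]; rfl
      rw [hx] at h1
      simp [h1ne] at h1
    have hpos := hpd.dotProduct_mulVec_pos hxne
    rw [quad x] at hpos
    have hSx : ∑ i : Fin T, x i.succ = (T:ℝ) := by
      simp [hx, Fin.succ_ne_zero]
    have hQx : ∑ i : Fin T, (x i.succ)^2 = (T:ℝ) := by
      simp [hx, Fin.succ_ne_zero]
    have hx0 : x 0 = -(τ' * σx * T / σμ) := by simp [hx]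
    rw [hSx, hQx, hx0] at hpos
    have h1 : σμ * -(τ' * σx * (T:ℝ) / σμ) + τ' * σx * (T:ℝ) = 0 := by field_simp; ring
    have h2 : (T:ℝ) - (T:ℝ)^2 / T = 0 := by field_simp; ring
    rw [h1, h2] at hpos
    have hc : 0 < (1 + ((T:ℝ)-1)*ρ)/T - τ'^2 := by
      by_contra hc
      push_neg at hc
      have hTT : (0:ℝ) < (T:ℝ)^2 := by positivity
      have hσ2 : (0:ℝ) < σx^2 := by positivity
      nlinarith [mul_nonneg (mul_nonneg (le_of_lt hσ2) (neg_nonneg.mpr hc)) (le_of_lt hTT)]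
    have hEq : (1 + ((T:ℝ)-1)*ρ) = (T:ℝ) * ((1 + ((T:ℝ)-1)*ρ)/T) := by field_simp
    nlinarith [mul_lt_mul_of_pos_left hc hTpos]
  · intro h
    refine posDef_iff_dotProduct_mulVec.mpr ⟨?_, ?_⟩
    · ext i j
      simp only [conjTranspose_apply, of_apply, star_trivial]
      by_cases hi : i = 0 <;> by_cases hj : j = 0 <;> simp [hi, hj, eq_comm]
    · intro x hx
      rw [quad x]
      set S := ∑ i : Fin T, x i.succ with hS
      set Q := ∑ i : Fin T, (x i.succ)^2 with hQ
      have hCS : S^2 ≤ (T:ℝ) * Q := by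
        have := sq_sum_le_card_mul_sum_sq (s := (Finset.univ : Finset (Fin T)))
          (f := fun i => x i.succ)
        simpa [hS, hQ] using this
      have hc2 : 0 < (1 + ((T:ℝ)-1)*ρ)/T - τ'^2 := by
        rw [lt_sub_iff_add_lt, ← sub_lt_iff_lt_add'] at *
        rw [lt_div_iff₀ hTpos]
        nlinarith
      have hρpos : 0 < 1 - ρ := by linarith
      have t1 : 0 ≤ (σμ * x 0 + τ' * σx * S)^2 := sq_nonneg _
      have t2 : 0 ≤ σx^2*(1-ρ)*(Q - S^2/T) := by
        apply mul_nonneg (by positivity)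
        rw [sub_nonneg, div_le_iff₀ hTpos]
        linarith
      have t3 : 0 ≤ σx^2*((1+((T:ℝ)-1)*ρ)/T - τ'^2)*S^2 := by positivity
      rcases eq_or_ne S 0 with hS0 | hS0
      · -- need Q > 0 or x 0 ≠ 0
        rcases eq_or_ne Q 0 with hQ0 | hQ0
        · -- all x i.succ = 0, so x 0 ≠ 0
          have hall : ∀ i : Fin T, x i.succ = 0 := by
            intro i
            have hnn : ∀ j ∈ (Finset.univ : Finset (Fin T)), (0:ℝ) ≤ (x j.succ)^2 :=
              fun j _ => sq_nonneg _
            have hsum0 : ∑ i : Fin T, (x i.succ)^2 = 0 := by rw [← hQ]; exact hQ0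
            have h0 := (Finset.sum_eq_zero_iff_of_nonneg hnn).mp hsum0 i (Finset.mem_univ i)
            exact pow_eq_zero_iff (n := 2) (by norm_num) |>.mp h0
          have hx0ne : x 0 ≠ 0 := by
            intro h0
            apply hx
            funext i
            rcases Fin.eq_zero_or_eq_succ i with rfl | ⟨j, rfl⟩
            · exact h0
            · exact hall j
          have : 0 < (σμ * x 0 + τ' * σx * S)^2 := by
            rw [hS0]
            have : σμ * x 0 + τ' * σx * 0 = σμ * x 0 := by ring
            rw [this]
            exact sq_pos_of_ne_zero (mul_ne_zero (ne_of_gt hσμ) hx0ne)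
          linarith
        · have hQpos : 0 < Q := by
            have hge : 0 ≤ Q := hQ ▸ Finset.sum_nonneg (fun (i : Fin T) _ => sq_nonneg (x i.succ))
            exact lt_of_le_of_ne hge (Ne.symm hQ0)
          have : 0 < σx^2*(1-ρ)*(Q - S^2/T) := by
            apply mul_pos (by positivity)
            rw [hS0]
            simpa using hQpos
          linarith
      · have : 0 < σx^2*((1+((T:ℝ)-1)*ρ)/T - τ'^2)*S^2 := by
          apply mul_pos (mul_pos (by positivity) hc2) (sq_pos_of_ne_zero hS0)
        linarith
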